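/- arXiv:2110.08790 — 3 statements merged into one kernel-verified Lean document; each statement's English description precedes it below -/
import Mathlib

section
/- Every 312-avoiding permutation of [n] is a web permutation, i.e., every cycle of a 312-avoiding permutation is an André cycle. Equivalently: if a permutation σ of [n] has a cycle that is not an André cycle, then σ contains a 312-pattern. -/
/-- Maximum of a list of naturals (0 for the empty list). -/
def listMax (l : List ℕ) : ℕ := l.foldr max 0

/-- André permutations (words of distinct positive integers), defined recursively:
the empty word and one-letter words are André; a longer word is André iff its minimum
letter `m` splits it as `l ++ m :: r` with `l`, `r` André and `max l < max r`. -/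
inductive IsAndre : List ℕ → Prop
  | nil : IsAndre []
  | single (a : ℕ) : IsAndre [a]
  | node (l r : List ℕ) (m : ℕ) : IsAndre l → IsAndre r →
      (∀ x ∈ l ++ r, m < x) → listMax l < listMax r → IsAndre (l ++ m :: r)

/-- A cycle, written as a list starting with its minimum, is an André cycle if the
remaining word is an André permutation. -/
def IsAndreCycleList (c : List ℕ) : Prop :=
  ∃ a t, c = a :: t ∧ (∀ x ∈ t, a < x) ∧ IsAndre t

/-- The cycle of `σ` through `x`, as the list `x, σ x, σ² x, …` of values in `[n]`
(recorded 1-indexed, i.e. shifted by one). -/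
noncomputable def permCycleList {m : ℕ} (σ : Equiv.Perm (Fin m)) (x : Fin m) : List ℕ :=
  (List.range (Function.minimalPeriod ⇑σ x)).map fun k => ((σ ^ k) x : ℕ) + 1

/-- A web permutation: each cycle (written starting at its minimal element) is an
André cycle. -/
def IsWebPerm {m : ℕ} (σ : Equiv.Perm (Fin m)) : Prop :=
  ∀ x : Fin m, (∀ k : ℕ, x ≤ (σ ^ k) x) → IsAndreCycleList (permCycleList σ x)

lemma le_listMax {l : List ℕ} {x : ℕ} (hx : x ∈ l) : x ≤ listMax l := by
  induction l with
  | nil => simp at hx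
  | cons a l ih =>
    rcases List.mem_cons.mp hx with h | h
    · subst h; exact le_max_left _ _
    · exact le_trans (ih h) (le_max_right _ _)

lemma listMax_lt {l : List ℕ} {M : ℕ} (hM : 0 < M) (h : ∀ x ∈ l, x < M) :
    listMax l < M := by
  induction l with
  | nil => simpa [listMax]
  | cons a l ih =>
    have he : listMax (a :: l) = max a (listMax l) := rfl
    rw [he]
    exact max_lt (h a (by simp)) (ih fun x hx => h x (by simp [hx]))

lemma exists_list_min {t : List ℕ} (ht : t ≠ []) : ∃ m ∈ t, ∀ x ∈ t, m ≤ x := by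
  induction t with
  | nil => simp at ht
  | cons a t ih =>
    rcases eq_or_ne t [] with rfl | h
    · exact ⟨a, by simp, by simp⟩
    · obtain ⟨m, hm, hmin⟩ := ih h
      rcases le_total a m with hle | hle
      · refine ⟨a, by simp, fun x hx => ?_⟩
        rcases List.mem_cons.mp hx with rfl | hx
        · exact le_refl _
        · exact le_trans hle (hmin x hx)
      · refine ⟨m, by simp [hm], fun x hx => ?_⟩
        rcases List.mem_cons.mp hx with rfl | hx
        · exact hle
        · exact hmin x hx

lemma mod_succ_cases {i len : ℕ} (h : i < len) :
    ((i + 1) % len = i + 1 ∧ i + 1 < len) ∨ ((i + 1) % len = 0 ∧ i + 1 = len) := by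
  rcases Nat.lt_or_ge (i + 1) len with h' | h'
  · exact Or.inl ⟨Nat.mod_eq_of_lt h', h'⟩
  · have he : i + 1 = len := by omega
    exact Or.inr ⟨by simp [he], he⟩

lemma master : ∀ (N : ℕ) (a : ℕ) (t : List ℕ) (f : ℕ → ℕ),
    t.length < N →
    (a :: t).Nodup →
    (∀ x ∈ t, a < x) →
    (∀ i, i < (a :: t).length →
      f ((a :: t).getD i 0) = (a :: t).getD ((i + 1) % (a :: t).length) 0) →
    (∀ x ∈ a :: t, ∀ y ∈ a :: t, ∀ z ∈ a :: t,
      x < y → y < z → f y < f z → f z < f x → False) →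
    IsAndre t := by
  intro N
  induction N with
  | zero => intro a t f hlen; omega
  | succ N ih =>
    intro a t f hlen hnd hmin hS havoid
    by_cases ht0 : t = []
    · subst ht0; exact IsAndre.nil
    by_cases ht1 : t.length = 1
    · obtain ⟨b, rfl⟩ : ∃ b, t = [b] := by
        rcases t with _ | ⟨b, t'⟩
        · simp at ht0
        · rcases t' with _ | ⟨b2, t''⟩
          · exact ⟨b, rfl⟩
          · simp at ht1
      exact IsAndre.single b
    have ht2 : 2 ≤ t.length := by
      have := List.length_pos_iff.mpr ht0
      omega
    classical
    obtain ⟨m, hmt, hmmin⟩ := exists_list_min ht0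
    obtain ⟨l, r, hsplit⟩ := List.append_of_mem hmt
    subst hsplit
    set c := a :: (l ++ m :: r) with hc
    have hclen : c.length = l.length + r.length + 2 := by
      simp [hc]
      omega
    have hcpos : 0 < c.length := by omega
    have ht2' : 2 ≤ l.length + r.length + 1 := by
      have := ht2; simp at this; omega
    have hlen' : l.length + r.length + 1 ≤ N := by
      have := hlen; simp at this; omega
    -- basic getD facts
    have hgmem : ∀ i, i < c.length → c.getD i 0 ∈ c := by
      intro i hi
      rw [List.getD_eq_getElem _ _ hi]
      exact List.getElem_mem _
    have hidx : ∀ x ∈ c, ∃ i, ∃ _ : i < c.length, c.getD i 0 = x := by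
      intro x hxc
      obtain ⟨i, hi, he⟩ := List.mem_iff_getElem.mp hxc
      exact ⟨i, hi, by rw [List.getD_eq_getElem _ _ hi]; exact he⟩
    have hfmem : ∀ x ∈ c, f x ∈ c := by
      intro x hxc
      obtain ⟨i, hi, rfl⟩ := hidx x hxc
      rw [hS i hi]
      exact hgmem _ (Nat.mod_lt _ hcpos)
    have hginj : ∀ i j, i < c.length → j < c.length → c.getD i 0 = c.getD j 0 → i = j := by
      intro i j hi hj he
      rw [List.getD_eq_getElem _ _ hi, List.getD_eq_getElem _ _ hj] at he
      exact (List.Nodup.getElem_inj_iff hnd).mp he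
    have hinj : ∀ x ∈ c, ∀ y ∈ c, f x = f y → x = y := by
      intro x hxc y hyc he
      obtain ⟨i, hi, rfl⟩ := hidx x hxc
      obtain ⟨j, hj, rfl⟩ := hidx y hyc
      rw [hS i hi, hS j hj] at he
      have hij := hginj _ _ (Nat.mod_lt _ hcpos) (Nat.mod_lt _ hcpos) he
      have : i = j := by
        rcases mod_succ_cases hi with ⟨e1, l1⟩ | ⟨e1, l1⟩ <;>
          rcases mod_succ_cases hj with ⟨e2, l2⟩ | ⟨e2, l2⟩ <;>
          rw [e1, e2] at hij <;> omega
      rw [this]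
    -- nodup pieces
    have hat : a ∉ l ++ m :: r := (List.nodup_cons.mp hnd).1
    have hndt : (l ++ m :: r).Nodup := (List.nodup_cons.mp hnd).2
    have hndl : l.Nodup := (List.nodup_append.mp hndt).1
    have hndmr : (m :: r).Nodup := (List.nodup_append.mp hndt).2.1
    have hdisj : l.Disjoint (m :: r) := (List.nodup_append'.mp hndt).2.2
    have hml : m ∉ l := fun hh => hdisj hh (by simp)
    have hmr : m ∉ r := (List.nodup_cons.mp hndmr).1
    have hndr : r.Nodup := (List.nodup_cons.mp hndmr).2
    -- membership helpers
    have hrt : ∀ u ∈ r, u ∈ l ++ m :: r := fun u hu =>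
      List.mem_append.mpr (Or.inr (List.mem_cons_of_mem _ hu))
    have hlt' : ∀ u ∈ l, u ∈ l ++ m :: r := fun u hu => List.mem_append.mpr (Or.inl hu)
    have hct : ∀ u ∈ l ++ m :: r, u ∈ c := by
      intro u hu; rw [hc]; exact List.mem_cons_of_mem _ hu
    have hmc : m ∈ c := hct _ hmt
    -- value lemmas
    have hv0 : c.getD 0 0 = a := by rw [hc]; simp
    have hvl : ∀ j, j < l.length → c.getD (j + 1) 0 = l.getD j 0 := by
      intro j hj
      rw [hc, List.getD_cons_succ, List.getD_append _ _ _ _ hj]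
    have hvm : c.getD (l.length + 1) 0 = m := by
      rw [hc, List.getD_cons_succ, List.getD_append_right _ _ _ _ (le_refl _), Nat.sub_self,
        List.getD_cons_zero]
    have hvr : ∀ j, j < r.length → c.getD (l.length + 2 + j) 0 = r.getD j 0 := by
      intro j hj
      rw [hc, show l.length + 2 + j = (l.length + 1 + j) + 1 by omega, List.getD_cons_succ,
        List.getD_append_right _ _ _ _ (by omega), show l.length + 1 + j - l.length = j + 1 by omega,
        List.getD_cons_succ]
    -- the last element q
    set q := c.getD (c.length - 1) 0 with hqdef
    have hq_mem : q ∈ c := hgmem _ (by omega)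
    have hfq : f q = a := by
      have hh := hS (c.length - 1) (by omega)
      have e : (c.length - 1 + 1) % c.length = 0 := by
        rw [show c.length - 1 + 1 = c.length by omega, Nat.mod_self]
      rw [e, hv0] at hh
      exact hh
    have hqa : q ≠ a := by
      intro he
      have h0 := hginj (c.length - 1) 0 (by omega) (by omega) (by rw [hv0, ← hqdef, he])
      omega
    have hqt : q ∈ l ++ m :: r := by
      have := hq_mem
      rw [hc] at this
      rcases List.mem_cons.mp this with h' | h'
      · exact absurd h' hqa
      · exact h'
    have haq : a < q := hmin q hqt
    -- the crucial step: f maps {≤ q} into itself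
    have hstep : ∀ y ∈ c, y ≤ q → f y ≤ q := by
      have hR : ∀ x ∈ c, q < x → q < f x := by
        intro x hxc hqx
        have hfxc := hfmem x hxc
        have hfxa : f x ≠ a := by
          intro he
          have : x = q := hinj x hxc q hq_mem (he.trans hfq.symm)
          omega
        have hafx : a < f x := by
          have := hfxc
          rw [hc] at this
          rcases List.mem_cons.mp this with h' | h'
          · exact absurd h' hfxa
          · exact hmin _ h'
        have hall : ∀ y ∈ c, y ≤ q → f y < f x := by
          intro y hyc hyq
          rcases eq_or_lt_of_le hyq with rfl | hlt2
          · rw [hfq]; exact hafx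
          · have h1 := havoid y hyc q hq_mem x hxc hlt2 hqx
            rw [hfq] at h1
            have h3 : f y ≠ f x := fun e => by
              have := hinj y hyc x hxc e; omega
            by_contra hcon
            push_neg at hcon
            exact h1 hafx (by omega)
        by_contra hqfx
        push_neg at hqfx
        set Lf : Finset ℕ := c.toFinset.filter (fun v => v ≤ q) with hLf
        have hmemL : ∀ v, v ∈ Lf ↔ v ∈ c ∧ v ≤ q := by
          intro v; simp [hLf, List.mem_toFinset]
        have hfxL : f x ∈ Lf := (hmemL _).mpr ⟨hfxc, hqfx⟩
        have himg : Lf.image f ⊆ Lf.erase (f x) := by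
          intro z hz
          obtain ⟨y, hyL, rfl⟩ := Finset.mem_image.mp hz
          obtain ⟨hyc, hyq⟩ := (hmemL _).mp hyL
          have h4 := hall y hyc hyq
          exact Finset.mem_erase.mpr ⟨by omega, (hmemL _).mpr ⟨hfmem y hyc, by omega⟩⟩
        have hinjL : Set.InjOn f ↑Lf := by
          intro u hu v hv he
          exact hinj u ((hmemL _).mp (Finset.mem_coe.mp hu)).1 v
            ((hmemL _).mp (Finset.mem_coe.mp hv)).1 he
        have h5 : Lf.card = (Lf.image f).card := (Finset.card_image_of_injOn hinjL).symm
        have h6 := Finset.card_le_card himg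
        have h7 := Finset.card_erase_lt_of_mem hfxL
        omega
      intro y hyc hyq
      by_contra hcon
      push_neg at hcon
      set Rf : Finset ℕ := c.toFinset.filter (fun v => q < v) with hRf
      have hmemR : ∀ v, v ∈ Rf ↔ v ∈ c ∧ q < v := by
        intro v; simp [hRf, List.mem_toFinset]
      have himgR : Rf.image f ⊆ Rf := by
        intro z hz
        obtain ⟨u, huR, rfl⟩ := Finset.mem_image.mp hz
        obtain ⟨huc, hqu⟩ := (hmemR _).mp huR
        exact (hmemR _).mpr ⟨hfmem u huc, hR u huc hqu⟩
      have hinjR : Set.InjOn f ↑Rf := fun u hu v hv he =>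
        hinj u ((hmemR _).mp (Finset.mem_coe.mp hu)).1 v
          ((hmemR _).mp (Finset.mem_coe.mp hv)).1 he
      have heq : Rf.image f = Rf :=
        Finset.eq_of_subset_of_card_le himgR (le_of_eq (Finset.card_image_of_injOn hinjR).symm)
      have hfyR : f y ∈ Rf := (hmemR _).mpr ⟨hfmem y hyc, hcon⟩
      rw [← heq] at hfyR
      obtain ⟨u, huR, he⟩ := Finset.mem_image.mp hfyR
      have heu : u = y := hinj u ((hmemR _).mp huR).1 y hyc he
      rw [heu] at huR
      have := ((hmemR _).mp huR).2
      omega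
    -- q is the maximum
    have hle_q : ∀ i, i < c.length → c.getD i 0 ≤ q := by
      intro i
      induction i with
      | zero => intro _; rw [hv0]; omega
      | succ i ih2 =>
        intro hi1
        have hi : i < c.length := by omega
        have hmod : (i + 1) % c.length = i + 1 := Nat.mod_eq_of_lt hi1
        have hh := hS i hi
        rw [hmod] at hh
        rw [← hh]
        exact hstep _ (hgmem i hi) (ih2 hi)
    have hmax : ∀ x ∈ c, x ≤ q := by
      intro x hxc
      obtain ⟨i, hi, rfl⟩ := hidx x hxc
      exact hle_q i hi
    -- r is nonempty and q ∈ r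
    have hrne : r ≠ [] := by
      intro hre
      subst hre
      have hr0 : ([] : List ℕ).length = 0 := rfl
      have hq_m : q = m := by
        rw [hqdef, show c.length - 1 = l.length + 1 by omega, hvm]
      have hL : 0 < l.length := by omega
      have hx0l : l.getD 0 0 ∈ l := by
        rw [List.getD_eq_getElem _ _ hL]; exact List.getElem_mem _
      have hx0t : l.getD 0 0 ∈ l ++ [m] := List.mem_append.mpr (Or.inl hx0l)
      have h1 : l.getD 0 0 ≤ m := by
        rw [← hq_m]; exact hmax _ (hct _ hx0t)
      have h2 : m ≤ l.getD 0 0 := hmmin _ hx0t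
      have : l.getD 0 0 = m := le_antisymm h1 h2
      exact hml (this ▸ hx0l)
    have hrpos : 0 < r.length := List.length_pos_iff.mpr hrne
    have hq_r : q ∈ r := by
      have e2 : q = r.getD (r.length - 1) 0 := by
        rw [hqdef, show c.length - 1 = l.length + 2 + (r.length - 1) by omega,
          hvr _ (by omega)]
      rw [e2, List.getD_eq_getElem _ _ (by omega)]
      exact List.getElem_mem _
    -- membership of getD within l and r
    have hmem_r : ∀ j, j < r.length → r.getD j 0 ∈ r := by
      intro j hj; rw [List.getD_eq_getElem _ _ hj]; exact List.getElem_mem _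
    have hmem_l : ∀ j, j < l.length → l.getD j 0 ∈ l := by
      intro j hj; rw [List.getD_eq_getElem _ _ hj]; exact List.getElem_mem _
    -- sub-instance A : cycle (a :: r)
    set fA := Function.update f a (f m) with hfA
    have hSA : ∀ i, i < (a :: r).length →
        fA ((a :: r).getD i 0) = (a :: r).getD ((i + 1) % (a :: r).length) 0 := by
      intro i hi
      simp only [List.length_cons] at hi ⊢
      rcases i with _ | j
      · rw [List.getD_cons_zero, hfA, Function.update_self]
        have hm1 := hS (l.length + 1) (by omega)
        rw [hvm, show l.length + 1 + 1 = l.length + 2 + 0 by omega] at hm1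
        rw [Nat.mod_eq_of_lt (by omega), hvr 0 (by omega)] at hm1
        rw [hm1, Nat.mod_eq_of_lt (by omega), List.getD_cons_succ]
      · have hj : j < r.length := by omega
        rw [List.getD_cons_succ]
        have hxa : r.getD j 0 ≠ a := fun e => hat (hrt _ (e ▸ hmem_r j hj))
        rw [hfA, Function.update_of_ne hxa]
        have hm1 := hS (l.length + 2 + j) (by omega)
        rw [hvr j hj] at hm1
        rcases Nat.lt_or_ge (j + 1) r.length with hcase | hcase
        · rw [show l.length + 2 + j + 1 = l.length + 2 + (j+1) by omega,
            Nat.mod_eq_of_lt (by omega), hvr (j+1) hcase] at hm1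
          rw [hm1, Nat.mod_eq_of_lt (by omega), List.getD_cons_succ]
        · have hje : j + 1 = r.length := by omega
          rw [show (l.length + 2 + j + 1) % c.length = 0 by
              rw [show l.length + 2 + j + 1 = c.length by omega, Nat.mod_self], hv0] at hm1
          rw [hm1, show (j + 1 + 1) % (r.length + 1) = 0 by
              rw [show j + 1 + 1 = r.length + 1 by omega, Nat.mod_self], List.getD_cons_zero]
    have hndA : (a :: r).Nodup :=
      List.nodup_cons.mpr ⟨fun hh => hat (hrt _ hh), hndr⟩
    have hminA : ∀ v ∈ r, a < v := fun v hv => hmin v (hrt v hv)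
    have havoidA : ∀ x ∈ a :: r, ∀ y ∈ a :: r, ∀ z ∈ a :: r,
        x < y → y < z → fA y < fA z → fA z < fA x → False := by
      intro x hx y hy z hz hxy hyz h1 h2
      have hxge : a ≤ x := by
        rcases List.mem_cons.mp hx with rfl | h'
        · exact le_refl _
        · exact le_of_lt (hmin x (hrt _ h'))
      have hyr : y ∈ r := by
        rcases List.mem_cons.mp hy with rfl | h'
        · omega
        · exact h'
      have hzr : z ∈ r := by
        rcases List.mem_cons.mp hz with rfl | h'
        · omega
        · exact h'
      have hya : y ≠ a := by omega
      have hza : z ≠ a := by omega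
      rw [hfA] at h1 h2
      rw [Function.update_of_ne hya] at h1
      rw [Function.update_of_ne hza] at h1 h2
      rcases List.mem_cons.mp hx with rfl | hxr
      · rw [Function.update_self] at h2
        have hmy : m < y := lt_of_le_of_ne (hmmin y (hrt _ hyr)) (fun e => hmr (e ▸ hyr))
        exact havoid m hmc y (hct _ (hrt _ hyr)) z (hct _ (hrt _ hzr)) hmy hyz h1 h2
      · rw [Function.update_of_ne (fun e => hat (hrt _ (e ▸ hxr)) : x ≠ a)] at h2
        exact havoid x (hct _ (hrt _ hxr)) y (hct _ (hrt _ hyr)) z (hct _ (hrt _ hzr)) hxy hyz h1 h2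
    have hAr : IsAndre r := ih a r fA (by omega) hndA hminA hSA havoidA
    -- sub-instance B : cycle (m :: l)
    set fB := Function.update f m (f a) with hfB
    have hSB : ∀ i, i < (m :: l).length →
        fB ((m :: l).getD i 0) = (m :: l).getD ((i + 1) % (m :: l).length) 0 := by
      intro i hi
      simp only [List.length_cons] at hi ⊢
      rcases i with _ | j
      · rw [List.getD_cons_zero, hfB, Function.update_self]
        have hm1 := hS 0 (by omega)
        rw [hv0, Nat.mod_eq_of_lt (by omega)] at hm1
        rcases Nat.eq_zero_or_pos l.length with hl0 | hl0
        · have h1' : c.getD 1 0 = m := by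
            have hthis := hvm
            rw [show l.length + 1 = 1 by omega] at hthis
            exact hthis
          rw [h1'] at hm1
          rw [hm1, show (0 + 1) % (l.length + 1) = 0 by simp [hl0], List.getD_cons_zero]
        · rw [show (1 : ℕ) = 0 + 1 by rfl, hvl 0 hl0] at hm1
          rw [hm1, Nat.mod_eq_of_lt (by omega), List.getD_cons_succ]
      · have hj : j < l.length := by omega
        rw [List.getD_cons_succ]
        have hxm : l.getD j 0 ≠ m := fun e => hml (e ▸ hmem_l j hj)
        rw [hfB, Function.update_of_ne hxm]
        have hm1 := hS (j + 1) (by omega)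
        rw [hvl j hj, Nat.mod_eq_of_lt (by omega)] at hm1
        rcases Nat.lt_or_ge (j + 1) l.length with hcase | hcase
        · rw [hvl (j + 1) hcase] at hm1
          rw [hm1, Nat.mod_eq_of_lt (by omega), List.getD_cons_succ]
        · have hje : j + 1 = l.length := by omega
          rw [show j + 1 + 1 = l.length + 1 by omega, hvm] at hm1
          rw [hm1, show (j + 1 + 1) % (l.length + 1) = 0 by
              rw [show j + 1 + 1 = l.length + 1 by omega, Nat.mod_self], List.getD_cons_zero]
    have hndB : (m :: l).Nodup := List.nodup_cons.mpr ⟨hml, hndl⟩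
    have hminB : ∀ v ∈ l, m < v := fun v hv =>
      lt_of_le_of_ne (hmmin v (hlt' v hv)) (fun e => hml (e ▸ hv))
    have havoidB : ∀ x ∈ m :: l, ∀ y ∈ m :: l, ∀ z ∈ m :: l,
        x < y → y < z → fB y < fB z → fB z < fB x → False := by
      intro x hx y hy z hz hxy hyz h1 h2
      have hxge : m ≤ x := by
        rcases List.mem_cons.mp hx with rfl | h'
        · exact le_refl _
        · exact le_of_lt (hminB x h')
      have hyl : y ∈ l := by
        rcases List.mem_cons.mp hy with rfl | h'
        · omega
        · exact h'
      have hzl : z ∈ l := by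
        rcases List.mem_cons.mp hz with rfl | h'
        · omega
        · exact h'
      rw [hfB] at h1 h2
      rw [Function.update_of_ne (by omega : y ≠ m)] at h1
      rw [Function.update_of_ne (by omega : z ≠ m)] at h1 h2
      rcases List.mem_cons.mp hx with rfl | hxl
      · rw [Function.update_self] at h2
        have hay : a < y := hmin y (hlt' _ hyl)
        have hac : a ∈ c := by rw [hc]; simp
        exact havoid a hac y (hct _ (hlt' _ hyl)) z (hct _ (hlt' _ hzl)) hay hyz h1 h2
      · rw [Function.update_of_ne (fun e => hml (e ▸ hxl) : x ≠ m)] at h2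
        exact havoid x (hct _ (hlt' _ hxl)) y (hct _ (hlt' _ hyl)) z (hct _ (hlt' _ hzl)) hxy hyz h1 h2
    have hAl : IsAndre l := ih m l fB (by omega) hndB hminB hSB havoidB
    -- assemble
    refine IsAndre.node l r m hAl hAr ?_ ?_
    · intro v hv
      rcases List.mem_append.mp hv with h' | h'
      · exact hminB v h'
      · exact lt_of_le_of_ne (hmmin v (hrt v h')) (fun e => hmr (e ▸ h'))
    · have hql : ∀ v ∈ l, v < q := fun v hv =>
        lt_of_le_of_ne (hmax v (hct _ (hlt' v hv)))
          (fun e => hdisj (e ▸ hv) (List.mem_cons_of_mem _ hq_r))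
      calc listMax l < q := listMax_lt (by omega) hql
        _ ≤ listMax r := le_listMax hq_r

/-- Every 312-avoiding permutation of `[n]` is a web permutation: if `σ` has no indices
`i < j < k` with `σ j < σ k < σ i`, then every cycle of `σ` is an André cycle. -/
theorem avoid312_isWebPerm (n : ℕ) (σ : Equiv.Perm (Fin n))
    (h : ¬ ∃ i j k : Fin n, i < j ∧ j < k ∧ σ j < σ k ∧ σ k < σ i) :
    IsWebPerm σ := by
  intro x hx
  classical
  have hper : Function.IsPeriodicPt ⇑σ (orderOf σ) x := by
    show (⇑σ)^[orderOf σ] x = x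
    rw [Equiv.Perm.iterate_eq_pow, pow_orderOf_eq_one]
    rfl
  have hppos : 0 < Function.minimalPeriod ⇑σ x :=
    hper.minimalPeriod_pos (orderOf_pos σ)
  set p := Function.minimalPeriod ⇑σ x with hpdef
  obtain ⟨p', hp'⟩ : ∃ p', p = p' + 1 := ⟨p - 1, by omega⟩
  have hpoweq : ∀ k : ℕ, (σ ^ k) x = (⇑σ)^[k] x := fun k => by
    rw [Equiv.Perm.iterate_eq_pow]
  have hmodpow : ∀ k : ℕ, (σ ^ (k % p)) x = (σ ^ k) x := by
    intro k
    rw [hpoweq, hpoweq, hpdef]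
    exact Function.iterate_mod_minimalPeriod_eq
  have hinjpow : ∀ i j, i < p → j < p → (σ ^ i) x = (σ ^ j) x → i = j := by
    intro i j hi hj he
    have hIJ := Function.iterate_injOn_Iio_minimalPeriod (f := ⇑σ) (x := x)
    rw [← hpdef] at hIJ
    exact hIJ (Set.mem_Iio.mpr hi) (Set.mem_Iio.mpr hj)
      (by show (⇑σ)^[i] x = (⇑σ)^[j] x; rw [← hpoweq, ← hpoweq]; exact he)
  set t : List ℕ := (List.range p').map (fun k => ((σ ^ (k + 1)) x : ℕ) + 1) with htdef
  have hform : permCycleList σ x = ((x : ℕ) + 1) :: t := by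
    rw [permCycleList, ← hpdef, hp', List.range_succ_eq_map, List.map_cons, List.map_map, htdef]
    simp [Function.comp_def, Nat.succ_eq_add_one]
  have hlent : t.length = p' := by simp [htdef]
  have hgd : ∀ i, i < p → (((x : ℕ) + 1) :: t).getD i 0 = ((σ ^ i) x : ℕ) + 1 := by
    intro i hi
    rcases i with _ | j
    · rw [List.getD_cons_zero]
      simp
    · rw [List.getD_cons_succ, htdef]
      have hj : j < p' := by omega
      rw [List.getD_eq_getElem _ _ (by simpa using hj)]
      simp
  set f : ℕ → ℕ := fun v => if hv : v - 1 < n then ((σ ⟨v - 1, hv⟩ : ℕ) + 1) else 0 with hfdef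
  have hfgen : ∀ U : Fin n, f ((U : ℕ) + 1) = ((σ U : ℕ) + 1) := by
    intro U
    rw [hfdef]
    simp [U.isLt]
  have hfval : ∀ k : ℕ, f (((σ ^ k) x : ℕ) + 1) = ((σ ^ (k + 1)) x : ℕ) + 1 := by
    intro k
    rw [hfgen ((σ ^ k) x), pow_succ', Equiv.Perm.mul_apply]
  have hlenc : ((((x : ℕ) + 1) :: t)).length = p := by
    simp [hlent, hp']
  have hS : ∀ i, i < ((((x : ℕ) + 1) :: t)).length →
      f (((((x : ℕ) + 1) :: t)).getD i 0) =
        ((((x : ℕ) + 1) :: t)).getD ((i + 1) % ((((x : ℕ) + 1) :: t)).length) 0 := by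
    intro i hi
    rw [hlenc] at hi ⊢
    rw [hgd i hi, hfval, hgd _ (Nat.mod_lt _ (by omega)), hmodpow]
  have hndc : (permCycleList σ x).Nodup := by
    rw [permCycleList, ← hpdef]
    refine List.Nodup.map_on ?_ List.nodup_range
    intro i hi j hj he
    exact hinjpow i j (List.mem_range.mp hi) (List.mem_range.mp hj)
      (Fin.val_injective (by omega))
  have hnd : ((((x : ℕ) + 1) :: t)).Nodup := hform ▸ hndc
  have htmin : ∀ v ∈ t, (x : ℕ) + 1 < v := by
    intro v hv
    rw [htdef] at hv
    obtain ⟨k, hk, rfl⟩ := List.mem_map.mp hv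
    have hk' := List.mem_range.mp hk
    have h1 : (x : ℕ) ≤ ((σ ^ (k + 1)) x : ℕ) := Fin.le_def.mp (hx (k + 1))
    have h2 : (σ ^ (k + 1)) x ≠ x := by
      intro he
      have hpp : Function.IsPeriodicPt ⇑σ (k + 1) x := by
        show (⇑σ)^[k + 1] x = x
        rw [← hpoweq]
        exact he
      have hle := Function.IsPeriodicPt.minimalPeriod_le (by omega) hpp
      rw [← hpdef] at hle
      omega
    have h3 : (x : ℕ) ≠ ((σ ^ (k + 1)) x : ℕ) := fun e => h2 (Fin.val_injective e).symm
    omega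
  have hmemc : ∀ u ∈ (((x : ℕ) + 1) :: t), ∃ U : Fin n, u = (U : ℕ) + 1 := by
    intro u hu
    rw [← hform, permCycleList] at hu
    obtain ⟨k, _, rfl⟩ := List.mem_map.mp hu
    exact ⟨(σ ^ k) x, rfl⟩
  have havoid : ∀ u ∈ (((x : ℕ) + 1) :: t), ∀ v ∈ (((x : ℕ) + 1) :: t),
      ∀ w ∈ (((x : ℕ) + 1) :: t), u < v → v < w → f v < f w → f w < f u → False := by
    intro u hu v hv w hw huv hvw h1 h2
    obtain ⟨U, rfl⟩ := hmemc u hu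
    obtain ⟨V, rfl⟩ := hmemc v hv
    obtain ⟨W, rfl⟩ := hmemc w hw
    rw [hfgen U] at h2
    rw [hfgen V] at h1
    rw [hfgen W] at h1 h2
    exact h ⟨U, V, W, Fin.lt_def.mpr (by omega), Fin.lt_def.mpr (by omega),
      Fin.lt_def.mpr (by omega), Fin.lt_def.mpr (by omega)⟩
  have hA : IsAndre t :=
    master (t.length + 1) ((x : ℕ) + 1) t f (by omega) hnd htmin hS havoid
  exact ⟨(x : ℕ) + 1, t, hform, htmin, hA⟩
end

section
/- Every André cycle on the ground set [n+2] is of the form (1, a_1, …, a_n, n+2); that is, if τ is a single cycle on [n+2] that is an André cycle, then τ(n+2) = 1. -/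
/-- An André cycle on the full ground set `[m+1]`: a permutation which is a single
`(m+1)`-cycle and whose cycle (started at the minimum `0`) is an André cycle. -/
def IsFullAndreCycle {m : ℕ} (τ : Equiv.Perm (Fin (m + 1))) : Prop :=
  Function.minimalPeriod ⇑τ 0 = m + 1 ∧ IsAndreCycleList (permCycleList τ 0)

lemma listMax_le {l : List ℕ} {b : ℕ} (h : ∀ x ∈ l, x ≤ b) : listMax l ≤ b := by
  induction l with
  | nil => exact Nat.zero_le _
  | cons a t ih =>
    exact max_le (h a (by simp)) (ih fun x hx => h x (by simp [hx]))

lemma IsAndre.le_getLast {t : List ℕ} (ht : IsAndre t) :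
    ∀ x ∈ t, ∀ h : t ≠ [], x ≤ t.getLast h := by
  induction ht with
  | nil => simp
  | single a => intro x hx h; simp at hx; simp [hx]
  | node l r m hl hr hm hmax ihl ihr =>
    have hrne : r ≠ [] := by
      rintro rfl
      simp [listMax] at hmax
    intro x hx h
    have hlast : (l ++ m :: r).getLast h = r.getLast hrne := by
      rw [List.getLast_append]
      exact List.getLast_cons hrne
    rw [hlast]
    have hmaxr : listMax r ≤ r.getLast hrne := listMax_le fun y hy => ihr y hy hrne
    rcases List.mem_append.mp hx with hx | hx
    · exact le_trans (le_listMax hx) (le_trans hmax.le hmaxr)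
    · rcases hx with _ | hx
      · have hh : r.head hrne ∈ r := List.head_mem hrne
        exact le_trans (hm _ (by simp [hh])).le (ihr _ hh hrne)
      · exact ihr x (by assumption) hrne

lemma getLast_eq_of_concat {l l' : List ℕ} {b : ℕ} (h : l = l' ++ [b]) (hne : l ≠ []) :
    l.getLast hne = b := by subst h; exact List.getLast_append _

/-- Every André cycle on `[n+2]` has the form `(1, a₁, …, a_n, n+2)`: it maps the
largest element `n+2` to the smallest element `1`. -/
theorem fullAndreCycle_apply_last (n : ℕ) (τ : Equiv.Perm (Fin (n + 2)))
    (h : IsFullAndreCycle τ) :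
    τ (Fin.last (n + 1)) = 0 := by
  obtain ⟨hper, a, t, hct, _, ht⟩ := h
  -- the list
  have hlist : permCycleList τ 0 =
      ((0 : ℕ) + 1) :: (List.range (n + 1)).map (fun k => ((τ ^ (k + 1)) 0 : ℕ) + 1) := by
    rw [permCycleList, hper, List.range_succ_eq_map]
    simp [Function.comp, pow_succ']
  rw [hlist] at hct
  obtain ⟨rfl, rfl⟩ : a = 1 ∧ t = (List.range (n + 1)).map
      (fun k => ((τ ^ (k + 1)) 0 : ℕ) + 1) := by
    constructor <;> [exact (List.cons.injEq _ _ _ _ ▸ hct).1.symm;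
      exact (List.cons.injEq _ _ _ _ ▸ hct).2.symm]
  set t := (List.range (n + 1)).map (fun k => ((τ ^ (k + 1)) 0 : ℕ) + 1) with htdef
  have htne : t ≠ [] := by simp [htdef]
  -- getLast of t
  have hlast : t.getLast htne = ((τ ^ (n + 1)) 0 : ℕ) + 1 := by
    refine getLast_eq_of_concat (l' := (List.range n).map
      (fun k => ((τ ^ (k + 1)) 0 : ℕ) + 1)) ?_ _
    rw [htdef, List.range_succ, List.map_append]; simp
  -- surjectivity: some power hits Fin.last
  have hinj : Function.Injective (fun k : Fin (n + 2) => (τ ^ (k : ℕ)) 0) := by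
    intro i j hij
    have := Function.iterate_injOn_Iio_minimalPeriod (f := ⇑τ) (x := 0)
      (by rw [hper]; exact Set.mem_Iio.mpr i.isLt)
      (by rw [hper]; exact Set.mem_Iio.mpr j.isLt) ?_
    · exact Fin.ext this
    · simpa [← Equiv.Perm.iterate_eq_pow] using hij
  have hsurj := Finite.injective_iff_surjective.mp hinj
  obtain ⟨K, hK⟩ := hsurj (Fin.last (n + 1))
  have hK0 : K ≠ 0 := by
    rintro rfl
    rw [Fin.ext_iff] at hK
    simp [Fin.last] at hK
  have hKval : (K : ℕ) ≠ 0 := fun hc => hK0 (Fin.ext hc)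
  set k' : ℕ := (K : ℕ) - 1 with hk'
  have hk'lt : k' < n + 1 := by have := K.isLt; omega
  have hKeq : (K : ℕ) = k' + 1 := by omega
  -- n+2 ∈ t
  have hmem : (n + 2 : ℕ) ∈ t := by
    rw [htdef]
    refine List.mem_map.mpr ⟨k', List.mem_range.mpr hk'lt, ?_⟩
    simp only at hK
    rw [← hKeq, hK]
    simp [Fin.last]
  have hle := ht.le_getLast _ hmem htne
  rw [hlast] at hle
  have hub : ((τ ^ (n + 1)) 0 : ℕ) + 1 ≤ n + 2 := by
    have := ((τ ^ (n + 1)) 0).isLt; omega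
  have heq : (τ ^ (n + 1)) 0 = Fin.last (n + 1) := by
    apply Fin.ext; simp [Fin.last]; omega
  calc τ (Fin.last (n + 1)) = τ ((τ ^ (n + 1)) 0) := by rw [heq]
    _ = (τ ^ (n + 2)) 0 := by conv_rhs => rw [pow_succ', Equiv.Perm.mul_apply]
    _ = 0 := by
        have h0 := Function.iterate_minimalPeriod (f := ⇑τ) (x := (0 : Fin (n + 2)))
        rw [hper] at h0
        rw [Equiv.Perm.iterate_eq_pow] at h0; exact h0
end

section
/- The number of nonnesting matchings on [2n] equals the number of noncrossing matchings on [2n], and both equal the Catalan number C_n. -/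
/-- A perfect matching on `[2n]`, encoded as a fixed-point-free involution: the arcs are
the pairs `{x, σ x}`. -/
def IsPerfMatching {m : ℕ} (σ : Equiv.Perm (Fin m)) : Prop :=
  σ * σ = 1 ∧ ∀ x, σ x ≠ x

/-- The matching `σ` has a crossing: arcs `{a,c}` and `{b,d}` with `a < b < c < d`. -/
def HasCrossing {m : ℕ} (σ : Equiv.Perm (Fin m)) : Prop :=
  ∃ a b : Fin m, a < b ∧ b < σ a ∧ σ a < σ b

/-- The matching `σ` has a nesting: arcs `{a,d}` and `{b,c}` with `a < b < c < d`. -/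
def HasNesting {m : ℕ} (σ : Equiv.Perm (Fin m)) : Prop :=
  ∃ a b : Fin m, a < b ∧ b < σ b ∧ σ b < σ a

open Finset DyckStep

set_option linter.unusedSectionVars false

namespace NCM


variable {m : ℕ}

/-- number of openers (true) strictly below index `i` -/
def uC (w : Fin m → Bool) (i : ℕ) : ℕ :=
  (univ.filter fun x : Fin m => x.val < i ∧ w x = true).card

def dC (w : Fin m → Bool) (i : ℕ) : ℕ :=
  (univ.filter fun x : Fin m => x.val < i ∧ w x = false).card

/-- openers in segment [i, j) -/
def uSeg (w : Fin m → Bool) (i j : ℕ) : ℕ :=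
  (univ.filter fun x : Fin m => i ≤ x.val ∧ x.val < j ∧ w x = true).card

def dSeg (w : Fin m → Bool) (i j : ℕ) : ℕ :=
  (univ.filter fun x : Fin m => i ≤ x.val ∧ x.val < j ∧ w x = false).card

lemma uC_split (w : Fin m → Bool) {i j : ℕ} (h : i ≤ j) :
    uC w j = uC w i + uSeg w i j := by
  rw [uC, uC, uSeg, ← Finset.card_union_of_disjoint (by
    simp only [Finset.disjoint_filter]
    intro x _ hx hy
    omega)]
  congr 1
  rw [← Finset.filter_or]
  apply Finset.filter_congr
  intro x _
  constructor
  · intro ⟨h1, h2⟩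
    by_cases hc : x.val < i
    · exact Or.inl ⟨hc, h2⟩
    · exact Or.inr ⟨by omega, h1, h2⟩
  · rintro (⟨h1, h2⟩ | ⟨h1, h2, h3⟩)
    · exact ⟨by omega, h2⟩
    · exact ⟨h2, h3⟩

lemma dC_split (w : Fin m → Bool) {i j : ℕ} (h : i ≤ j) :
    dC w j = dC w i + dSeg w i j := by
  rw [dC, dC, dSeg, ← Finset.card_union_of_disjoint (by
    simp only [Finset.disjoint_filter]
    intro x _ hx hy
    omega)]
  congr 1
  rw [← Finset.filter_or]
  apply Finset.filter_congr
  intro x _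
  constructor
  · intro ⟨h1, h2⟩
    by_cases hc : x.val < i
    · exact Or.inl ⟨hc, h2⟩
    · exact Or.inr ⟨by omega, h1, h2⟩
  · rintro (⟨h1, h2⟩ | ⟨h1, h2, h3⟩)
    · exact ⟨by omega, h2⟩
    · exact ⟨h2, h3⟩

lemma uSeg_succ (w : Fin m → Bool) (i : ℕ) (h : i < m) :
    uSeg w i (i+1) = if w ⟨i, h⟩ then 1 else 0 := by
  rw [uSeg]
  by_cases hw : w ⟨i, h⟩ = true
  · rw [if_pos hw]
    rw [Finset.card_eq_one]
    refine ⟨⟨i, h⟩, ?_⟩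
    ext x
    simp only [Finset.mem_filter, Finset.mem_univ, true_and, Finset.mem_singleton]
    constructor
    · intro ⟨h1, h2, _⟩
      have hx : x.val = i := by omega
      exact Fin.ext hx
    · rintro rfl
      exact ⟨le_refl _, Nat.lt_succ_self _, hw⟩
  · rw [if_neg (by simpa using hw)]
    rw [Finset.card_eq_zero]
    ext x
    simp only [Finset.mem_filter, Finset.mem_univ, true_and, Finset.notMem_empty, iff_false]
    intro ⟨h1, h2, h3⟩
    have hx : x.val = i := by omega
    have : x = ⟨i, h⟩ := Fin.ext hx
    exact hw (this ▸ h3)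

lemma dSeg_succ (w : Fin m → Bool) (i : ℕ) (h : i < m) :
    dSeg w i (i+1) = if w ⟨i, h⟩ then 0 else 1 := by
  rw [dSeg]
  by_cases hw : w ⟨i, h⟩ = true
  · rw [if_pos hw, Finset.card_eq_zero]
    ext x
    simp only [Finset.mem_filter, Finset.mem_univ, true_and, Finset.notMem_empty, iff_false]
    intro ⟨h1, h2, h3⟩
    have hx : x.val = i := by omega
    have : x = ⟨i, h⟩ := Fin.ext hx
    rw [this] at h3; rw [hw] at h3; exact Bool.noConfusion h3
  · rw [if_neg (by simpa using hw), Finset.card_eq_one]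
    refine ⟨⟨i, h⟩, ?_⟩
    ext x
    simp only [Finset.mem_filter, Finset.mem_univ, true_and, Finset.mem_singleton]
    constructor
    · intro ⟨h1, h2, _⟩
      have hx : x.val = i := by omega
      exact Fin.ext hx
    · rintro rfl
      exact ⟨le_refl _, Nat.lt_succ_self _, by simpa using hw⟩

/-- the height function -/
def hgt (w : Fin m → Bool) (i : ℕ) : ℤ := (uC w i : ℤ) - (dC w i : ℤ)

lemma hgt_zero (w : Fin m → Bool) : hgt w 0 = 0 := by
  simp [hgt, uC, dC]

lemma hgt_succ (w : Fin m → Bool) (i : ℕ) (h : i < m) :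
    hgt w (i + 1) = hgt w i + (if w ⟨i, h⟩ then 1 else -1) := by
  rw [hgt, hgt, uC_split w (Nat.le_succ i), dC_split w (Nat.le_succ i),
    uSeg_succ w i h, dSeg_succ w i h]
  by_cases hw : w ⟨i, h⟩ <;> simp [hw] <;> push_cast <;> ring

lemma hgt_succ_of_ge (w : Fin m → Bool) (i : ℕ) (h : m ≤ i) :
    hgt w (i + 1) = hgt w i := by
  rw [hgt, hgt, uC_split w (Nat.le_succ i), dC_split w (Nat.le_succ i)]
  have h1 : uSeg w i (i+1) = 0 := by
    rw [uSeg, Finset.card_eq_zero]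
    ext x
    simp only [Finset.mem_filter, Finset.mem_univ, true_and, Finset.notMem_empty, iff_false]
    intro ⟨h1, _, _⟩
    exact absurd x.isLt (by omega)
  have h2 : dSeg w i (i+1) = 0 := by
    rw [dSeg, Finset.card_eq_zero]
    ext x
    simp only [Finset.mem_filter, Finset.mem_univ, true_and, Finset.notMem_empty, iff_false]
    intro ⟨h1, _, _⟩
    exact absurd x.isLt (by omega)
  rw [h1, h2]
  simp

lemma hgt_step (w : Fin m → Bool) (i : ℕ) :
    hgt w (i+1) = hgt w i + 1 ∨ hgt w (i+1) = hgt w i - 1 ∨ hgt w (i+1) = hgt w i := by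
  by_cases h : i < m
  · rw [hgt_succ w i h]
    by_cases hw : w ⟨i, h⟩ <;> simp [hw] <;> omega
  · rw [hgt_succ_of_ge w i (by omega)]
    tauto

/-- discrete IVT, ascending -/
lemma ivt_up (f : ℕ → ℤ)
    (hstep : ∀ k, f (k+1) = f k + 1 ∨ f (k+1) = f k - 1 ∨ f (k+1) = f k)
    {i j : ℕ} (v : ℤ) (hij : i ≤ j) (h1 : f i ≤ v) (h2 : v ≤ f j) :
    ∃ k, i ≤ k ∧ k ≤ j ∧ f k = v := by
  induction j with
  | zero =>
    have hi0 : i = 0 := by omega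
    subst hi0
    exact ⟨0, le_refl _, le_refl _, by omega⟩
  | succ j ih =>
    by_cases hi : i ≤ j
    · by_cases hv : v ≤ f j
      · obtain ⟨k, hk1, hk2, hk3⟩ := ih hi hv
        exact ⟨k, hk1, by omega, hk3⟩
      · -- f j < v ≤ f (j+1), step so f (j+1) ≤ f j + 1 < v + 1, so f (j+1) = v
        have := hstep j
        exact ⟨j+1, by omega, le_refl _, by omega⟩
    · have : i = j + 1 := by omega
      exact ⟨i, le_refl _, by omega, le_antisymm (this ▸ h1) (this ▸ h2)⟩

lemma ivt_down (f : ℕ → ℤ)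
    (hstep : ∀ k, f (k+1) = f k + 1 ∨ f (k+1) = f k - 1 ∨ f (k+1) = f k)
    {i j : ℕ} (v : ℤ) (hij : i ≤ j) (h1 : v ≤ f i) (h2 : f j ≤ v) :
    ∃ k, i ≤ k ∧ k ≤ j ∧ f k = v := by
  induction j with
  | zero =>
    have hi0 : i = 0 := by omega
    subst hi0
    exact ⟨0, le_refl _, le_refl _, by omega⟩
  | succ j ih =>
    by_cases hi : i ≤ j
    · by_cases hv : f j ≤ v
      · obtain ⟨k, hk1, hk2, hk3⟩ := ih hi hv
        exact ⟨k, hk1, by omega, hk3⟩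
      · have := hstep j
        exact ⟨j+1, by omega, le_refl _, by omega⟩
    · have hij' : i = j + 1 := by omega
      subst hij'
      exact ⟨j + 1, le_refl _, le_refl _, by omega⟩


/-- the word of a matching -/
def wd (σ : Equiv.Perm (Fin m)) : Fin m → Bool := fun x => decide (x < σ x)

/-- a ballot sequence: balanced + every prefix has at least as many `true`s -/
def Ballot (w : Fin m → Bool) : Prop := uC w m = dC w m ∧ ∀ i, dC w i ≤ uC w i

section PM
variable {σ : Equiv.Perm (Fin m)} (hσ : IsPerfMatching σ)

include hσ

lemma pm_apply_apply (x : Fin m) : σ (σ x) = x := by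
  have := congrArg (fun τ : Equiv.Perm (Fin m) => τ x) hσ.1
  simpa using this

lemma wd_true_iff (x : Fin m) : wd σ x = true ↔ x < σ x := by simp [wd]

lemma wd_false_iff (x : Fin m) : wd σ x = false ↔ σ x < x := by
  simp only [wd, decide_eq_false_iff_not, not_lt]
  constructor
  · intro h
    exact lt_of_le_of_ne h (fun he => hσ.2 x he)
  · intro h
    exact le_of_lt h

lemma wd_apply (x : Fin m) : wd σ (σ x) = !(wd σ x) := by
  by_cases h : wd σ x = true
  · rw [h]
    rw [wd_true_iff hσ] at h
    simp only [Bool.not_true]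
    rw [wd_false_iff hσ, pm_apply_apply hσ]
    exact h
  · have h' : wd σ x = false := by simpa using h
    rw [h']
    rw [wd_false_iff hσ] at h'
    simp only [Bool.not_false]
    rw [wd_true_iff hσ, pm_apply_apply hσ]
    exact h'

/-- the word of a perfect matching is a ballot sequence -/
lemma ballot_wd : Ballot (wd σ) := by
  constructor
  · -- balanced: σ is a bijection between openers and closers
    apply Finset.card_bij (fun x _ => σ x)
    · intro x hx
      simp only [Finset.mem_filter, Finset.mem_univ, true_and] at hx ⊢
      refine ⟨(σ x).isLt, ?_⟩
      rw [wd_apply hσ, hx.2]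
      rfl
    · intro x hx y hy hxy
      exact σ.injective hxy
    · intro y hy
      simp only [Finset.mem_filter, Finset.mem_univ, true_and] at hy ⊢
      refine ⟨σ y, ⟨(σ y).isLt, ?_⟩, pm_apply_apply hσ y⟩
      rw [wd_apply hσ, hy.2]
      rfl
  · -- prefix: each closer below i has its opener below i
    intro i
    apply Finset.card_le_card_of_injOn (fun x => σ x)
    · intro x hx
      simp only [Finset.mem_coe, Finset.mem_filter, Finset.mem_univ, true_and] at hx ⊢
      have h1 : σ x < x := (wd_false_iff hσ x).mp hx.2
      refine ⟨by omega, ?_⟩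
      rw [wd_apply hσ, hx.2]
      rfl
    · intro x _ y _ hxy
      exact σ.injective hxy

end PM

/-- two perfect matchings agreeing on openers are equal -/
lemma pm_ext {σ τ : Equiv.Perm (Fin m)} (hσ : IsPerfMatching σ) (hτ : IsPerfMatching τ)
    (h : ∀ x, wd σ x = true → σ x = τ x) : σ = τ := by
  ext x
  show (σ x).val = (τ x).val
  by_cases hx : wd σ x = true
  · rw [h x hx]
  · have hx' : wd σ x = false := by simpa using hx
    have h1 : σ x < x := (wd_false_iff hσ x).mp hx'
    have h2 : wd σ (σ x) = true := by rw [wd_apply hσ, hx']; rfl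
    have h3 : σ (σ x) = τ (σ x) := h _ h2
    rw [pm_apply_apply hσ] at h3
    have : τ (τ (σ x)) = σ x := pm_apply_apply hτ _
    have h4 : τ x = σ x := by
      conv_lhs => rw [h3]
      exact this
    rw [h4]


section FIFO

variable {m : ℕ}

def Op (w : Fin m → Bool) : Finset (Fin m) := univ.filter fun x => w x = true
def Cl (w : Fin m → Bool) : Finset (Fin m) := univ.filter fun x => w x = false

lemma mem_Op {w : Fin m → Bool} {x : Fin m} : x ∈ Op w ↔ w x = true := by simp [Op]
lemma mem_Cl {w : Fin m → Bool} {x : Fin m} : x ∈ Cl w ↔ w x = false := by simp [Cl]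

lemma op_card (w : Fin m → Bool) : (Op w).card = uC w m := by
  apply Finset.card_bij (fun x _ => x) <;> simp [Op, uC]
lemma cl_card (w : Fin m → Bool) : (Cl w).card = dC w m := by
  apply Finset.card_bij (fun x _ => x) <;> simp [Cl, dC]

lemma cardOC {w : Fin m → Bool} (hb : Ballot w) : (Op w).card = (Cl w).card := by
  rw [op_card, cl_card, hb.1]

/-- the order isomorphism between openers and closers -/
noncomputable def fifoIso {w : Fin m → Bool} (hb : Ballot w) : ↥(Op w) ≃o ↥(Cl w) :=
  ((Op w).orderIsoOfFin rfl).symm.trans ((Cl w).orderIsoOfFin (cardOC hb).symm)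

noncomputable def fifoFun {w : Fin m → Bool} (hb : Ballot w) (x : Fin m) : Fin m :=
  if hx : w x = true then (fifoIso hb ⟨x, mem_Op.mpr hx⟩ : Fin m)
  else ((fifoIso hb).symm ⟨x, mem_Cl.mpr (by simpa using hx)⟩ : Fin m)

lemma fifoFun_of_true {w : Fin m → Bool} (hb : Ballot w) {x : Fin m} (hx : w x = true) :
    fifoFun hb x = (fifoIso hb ⟨x, mem_Op.mpr hx⟩ : Fin m) := by
  rw [fifoFun, dif_pos hx]

lemma fifoFun_of_false {w : Fin m → Bool} (hb : Ballot w) {x : Fin m} (hx : w x = false) :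
    fifoFun hb x = ((fifoIso hb).symm ⟨x, mem_Cl.mpr hx⟩ : Fin m) := by
  rw [fifoFun, dif_neg (by simp [hx])]

lemma fifoFun_w_true {w : Fin m → Bool} (hb : Ballot w) {x : Fin m} (hx : w x = true) :
    w (fifoFun hb x) = false := by
  rw [fifoFun_of_true hb hx]
  exact mem_Cl.mp (fifoIso hb ⟨x, mem_Op.mpr hx⟩).2

lemma fifoFun_w_false {w : Fin m → Bool} (hb : Ballot w) {x : Fin m} (hx : w x = false) :
    w (fifoFun hb x) = true := by
  rw [fifoFun_of_false hb hx]
  exact mem_Op.mp ((fifoIso hb).symm ⟨x, mem_Cl.mpr hx⟩).2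

lemma fifoFun_invol {w : Fin m → Bool} (hb : Ballot w) : Function.Involutive (fifoFun hb) := by
  intro x
  by_cases hx : w x = true
  · have h1 := fifoFun_w_true hb hx
    rw [fifoFun_of_false hb h1]
    have key : (fifoIso hb).symm ⟨fifoFun hb x, mem_Cl.mpr h1⟩ = ⟨x, mem_Op.mpr hx⟩ := by
      have e1 : (⟨fifoFun hb x, mem_Cl.mpr h1⟩ : ↥(Cl w)) = fifoIso hb ⟨x, mem_Op.mpr hx⟩ :=
        Subtype.ext (fifoFun_of_true hb hx)
      rw [e1, OrderIso.symm_apply_apply]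
    exact congrArg Subtype.val key
  · have hx' : w x = false := by simpa using hx
    have h1 := fifoFun_w_false hb hx'
    rw [fifoFun_of_true hb h1]
    have key : fifoIso hb ⟨fifoFun hb x, mem_Op.mpr h1⟩ = ⟨x, mem_Cl.mpr hx'⟩ := by
      have e1 : (⟨fifoFun hb x, mem_Op.mpr h1⟩ : ↥(Op w)) = (fifoIso hb).symm ⟨x, mem_Cl.mpr hx'⟩ :=
        Subtype.ext (fifoFun_of_false hb hx')
      rw [e1, OrderIso.apply_symm_apply]
    exact congrArg Subtype.val key

noncomputable def matchFIFO {w : Fin m → Bool} (hb : Ballot w) : Equiv.Perm (Fin m) :=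
  Function.Involutive.toPerm _ (fifoFun_invol hb)

lemma matchFIFO_apply {w : Fin m → Bool} (hb : Ballot w) (x : Fin m) :
    matchFIFO hb x = fifoFun hb x := rfl

lemma matchFIFO_perfect {w : Fin m → Bool} (hb : Ballot w) : IsPerfMatching (matchFIFO hb) := by
  constructor
  · ext x
    simp only [Equiv.Perm.mul_apply, matchFIFO_apply, Equiv.Perm.one_apply]
    rw [fifoFun_invol hb x]
  · intro x h
    rw [matchFIFO_apply] at h
    by_cases hx : w x = true
    · have := fifoFun_w_true hb hx
      rw [h, hx] at this
      exact Bool.noConfusion this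
    · have hx' : w x = false := by simpa using hx
      have := fifoFun_w_false hb hx'
      rw [h, hx'] at this
      exact Bool.noConfusion this

/-- with the ballot property, each opener comes before its matched closer -/
lemma fifo_lt {w : Fin m → Bool} (hb : Ballot w) {x : Fin m} (hx : w x = true) :
    x < fifoFun hb x := by
  by_contra hc
  rw [fifoFun_of_true hb hx] at hc
  set c : Fin m := (fifoIso hb ⟨x, mem_Op.mpr hx⟩ : Fin m) with hcdef
  have hcx : c < x := by
    rcases lt_or_eq_of_le (not_lt.mp hc) with h | h
    · exact h
    · exfalso
      have h1 : w c = false := mem_Cl.mp (fifoIso hb ⟨x, mem_Op.mpr hx⟩).2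
      rw [h] at h1
      rw [hx] at h1
      exact Bool.noConfusion h1
  set k : Fin (Op w).card := ((Op w).orderIsoOfFin rfl).symm ⟨x, mem_Op.mpr hx⟩ with hkdef
  have hek : c = ((Cl w).orderIsoOfFin (cardOC hb).symm k : Fin m) := rfl
  -- Claim 1 : k + 1 ≤ dC w (c+1)
  have claim1 : (k : ℕ) + 1 ≤ dC w (c.val + 1) := by
    rw [← Fin.card_Iic k]
    apply Finset.card_le_card_of_injOn
      (fun j => ((Cl w).orderIsoOfFin (cardOC hb).symm j : Fin m))
    · intro j hj
      simp only [Finset.mem_coe, Finset.mem_Iic] at hj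
      simp only [dC, Finset.mem_coe, Finset.mem_filter, Finset.mem_univ, true_and]
      constructor
      · have : ((Cl w).orderIsoOfFin (cardOC hb).symm j : ↥(Cl w))
            ≤ ((Cl w).orderIsoOfFin (cardOC hb).symm k : ↥(Cl w)) :=
          ((Cl w).orderIsoOfFin (cardOC hb).symm).monotone hj
        have h2 : (((Cl w).orderIsoOfFin (cardOC hb).symm j : Fin m) : Fin m)
            ≤ ((Cl w).orderIsoOfFin (cardOC hb).symm k : Fin m) := this
        rw [← hek] at h2
        omega
      · exact mem_Cl.mp ((Cl w).orderIsoOfFin (cardOC hb).symm j).2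
    · intro j1 _ j2 _ hj
      exact ((Cl w).orderIsoOfFin (cardOC hb).symm).injective (Subtype.ext hj)
  -- Claim 2 : uC w (c+1) ≤ k
  have claim2 : uC w (c.val + 1) ≤ (k : ℕ) := by
    rw [← Fin.card_Iio k]
    apply Finset.card_le_card_of_injOn
      (fun z => if hz : z ∈ Op w then ((Op w).orderIsoOfFin rfl).symm ⟨z, hz⟩ else k)
    · intro z hz
      simp only [uC, Finset.mem_coe, Finset.mem_filter, Finset.mem_univ, true_and] at hz
      have hzo : z ∈ Op w := mem_Op.mpr hz.2
      simp only [Finset.mem_coe, dif_pos hzo]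
      simp only [Finset.mem_Iio]
      have hzx : z < x := lt_of_le_of_lt (by omega : z ≤ c) hcx
      have : (⟨z, hzo⟩ : ↥(Op w)) < ⟨x, mem_Op.mpr hx⟩ := Subtype.mk_lt_mk.mpr hzx
      exact (((Op w).orderIsoOfFin rfl).symm.lt_iff_lt).mpr this
    · intro z1 hz1 z2 hz2 he
      simp only [Finset.mem_coe, Finset.mem_filter, Finset.mem_univ, true_and] at hz1 hz2
      have hm1 := mem_Op.mpr hz1.2
      have hm2 := mem_Op.mpr hz2.2
      simp only [dif_pos hm1, dif_pos hm2] at he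
      have := ((Op w).orderIsoOfFin rfl).symm.injective he
      exact congrArg Subtype.val this
  have := hb.2 (c.val + 1)
  omega

lemma wd_matchFIFO {w : Fin m → Bool} (hb : Ballot w) : wd (matchFIFO hb) = w := by
  funext x
  by_cases hx : w x = true
  · rw [hx, wd]
    simp only [decide_eq_true_eq]
    rw [matchFIFO_apply]
    exact fifo_lt hb hx
  · have hx' : w x = false := by simpa using hx
    rw [hx', wd]
    simp only [decide_eq_false_iff_not, not_lt, matchFIFO_apply]
    have h1 := fifoFun_w_false hb hx'
    have h2 := fifo_lt hb h1
    rw [fifoFun_invol hb x] at h2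
    exact decide_eq_false (not_lt.mpr (le_of_lt h2))

lemma matchFIFO_nonnesting {w : Fin m → Bool} (hb : Ballot w) : ¬ HasNesting (matchFIFO hb) := by
  rintro ⟨a, b, hab, hbb, hba⟩
  set σ := matchFIFO hb with hσdef
  have hwb : w b = true := by
    by_contra hc
    have hc' : w b = false := by simpa using hc
    have h1 := fifoFun_w_false hb hc'
    have h2 := fifo_lt hb h1
    rw [fifoFun_invol hb b] at h2
    rw [matchFIFO_apply] at hbb
    exact absurd hbb (not_lt.mpr (le_of_lt h2))
  by_cases hwa : w a = true
  · -- both openers : fifoIso is monotone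
    have : σ a < σ b := by
      rw [matchFIFO_apply, matchFIFO_apply, fifoFun_of_true hb hwa, fifoFun_of_true hb hwb]
      have h1 : (⟨a, mem_Op.mpr hwa⟩ : ↥(Op w)) < ⟨b, mem_Op.mpr hwb⟩ := Subtype.mk_lt_mk.mpr hab
      exact (fifoIso hb).lt_iff_lt.mpr h1
    exact absurd hba (not_lt.mpr (le_of_lt this))
  · have hwa' : w a = false := by simpa using hwa
    have h1 := fifoFun_w_false hb hwa'
    have h2 := fifo_lt hb h1
    rw [fifoFun_invol hb a] at h2
    rw [← matchFIFO_apply hb] at h2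
    -- σ a < a < b < σ b < σ a : contradiction
    have : (σ a : Fin m) < σ b := lt_trans (lt_trans h2 hab) hbb
    exact absurd hba (not_lt.mpr (le_of_lt this))

end FIFO

section FIFOUnique

variable {m : ℕ} {σ : Equiv.Perm (Fin m)}

theorem nonnesting_eq_matchFIFO (hσ : IsPerfMatching σ) (hnn : ¬ HasNesting σ) :
    σ = matchFIFO (ballot_wd hσ) := by
  have hOC : ∀ x : Fin m, x ∈ Op (wd σ) → σ x ∈ Cl (wd σ) := by
    intro x hx
    rw [mem_Cl, wd_apply hσ, mem_Op.mp hx]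
    rfl
  have hCO : ∀ x : Fin m, x ∈ Cl (wd σ) → σ x ∈ Op (wd σ) := by
    intro x hx
    rw [mem_Op, wd_apply hσ, mem_Cl.mp hx]
    rfl
  let g : ↥(Op (wd σ)) ≃ ↥(Cl (wd σ)) :=
    { toFun := fun x => ⟨σ x, hOC x x.2⟩
      invFun := fun y => ⟨σ y, hCO y y.2⟩
      left_inv := fun x => Subtype.ext (pm_apply_apply hσ x)
      right_inv := fun y => Subtype.ext (pm_apply_apply hσ y) }
  have mono1 : Monotone g := by
    intro a b hab
    rcases eq_or_lt_of_le hab with h | h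
    · rw [h]
    · have hab' : (a : Fin m) < b := h
      have hbb : (b : Fin m) < σ b := (wd_true_iff hσ _).mp (mem_Op.mp b.2)
      have : σ (a : Fin m) < σ b := by
        by_contra hc
        have hne : σ (b : Fin m) ≠ σ a := fun he => (ne_of_lt hab') (σ.injective he.symm) |>.elim
        have : σ (b : Fin m) < σ a := lt_of_le_of_ne (not_lt.mp hc) hne
        exact hnn ⟨a, b, hab', hbb, this⟩
      exact le_of_lt this
  have mono2 : Monotone g.symm := by
    intro a b hab
    rcases eq_or_lt_of_le hab with h | h
    · rw [h]
    · have hab' : (a : Fin m) < b := h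
      have haa : σ (a : Fin m) < a := (wd_false_iff hσ _).mp (mem_Cl.mp a.2)
      have : σ (a : Fin m) < σ b := by
        by_contra hc
        have hne : σ (a : Fin m) ≠ σ b := fun he => (ne_of_lt hab') (σ.injective he) |>.elim
        have h2 : σ (b : Fin m) < σ a := lt_of_le_of_ne (not_lt.mp hc) hne.symm
        refine hnn ⟨σ b, σ a, h2, ?_, ?_⟩
        · rw [pm_apply_apply hσ]; exact haa
        · rw [pm_apply_apply hσ, pm_apply_apply hσ]; exact hab'
      exact le_of_lt this
  let giso : ↥(Op (wd σ)) ≃o ↥(Cl (wd σ)) := g.toOrderIso mono1 mono2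
  have hsub : giso = fifoIso (ballot_wd hσ) := Subsingleton.elim _ _
  apply pm_ext hσ (matchFIFO_perfect (ballot_wd hσ))
  intro x hx
  rw [matchFIFO_apply, fifoFun_of_true (ballot_wd hσ) hx]
  have h1 : σ x = ((giso ⟨x, mem_Op.mpr hx⟩ : ↥(Cl (wd σ))) : Fin m) := rfl
  rw [h1, hsub]

end FIFOUnique

section LIFO

variable {m : ℕ}

lemma hgt_nonneg {w : Fin m → Bool} (hb : Ballot w) (i : ℕ) : 0 ≤ hgt w i := by
  have := hb.2 i
  rw [hgt]
  omega

lemma hgt_final {w : Fin m → Bool} (hb : Ballot w) : hgt w m = 0 := by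
  rw [hgt, hb.1]
  omega

lemma hgt_succ_true {w : Fin m → Bool} {a : ℕ} (ha : a < m) (hw : w ⟨a, ha⟩ = true) :
    hgt w (a+1) = hgt w a + 1 := by
  rw [hgt_succ w a ha, if_pos hw]

lemma hgt_succ_false {w : Fin m → Bool} {a : ℕ} (ha : a < m) (hw : w ⟨a, ha⟩ = false) :
    hgt w (a+1) = hgt w a - 1 := by
  rw [hgt_succ w a ha, if_neg (by simp [hw])]
  ring

/-- the predicate defining the partner of an opener -/
def oP (w : Fin m → Bool) (a : ℕ) (c : ℕ) : Prop := a < c ∧ c < m ∧ hgt w (c+1) = hgt w a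

instance {w : Fin m → Bool} {a : ℕ} : DecidablePred (oP w a) := fun _ => by
  unfold oP; infer_instance

lemma oExists {w : Fin m → Bool} (hb : Ballot w) {a : ℕ} (ha : a < m)
    (hw : w ⟨a, ha⟩ = true) : ∃ c, oP w a c := by
  have h1 : hgt w (a+1) = hgt w a + 1 := hgt_succ_true ha hw
  have h2 : hgt w m ≤ hgt w a := by
    rw [hgt_final hb]; exact hgt_nonneg hb a
  obtain ⟨k, hk1, hk2, hk3⟩ := ivt_down (hgt w) (hgt_step w) (hgt w a)
    (show a+1 ≤ m by omega) (by omega) h2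
  have hk4 : k ≠ a+1 := by intro h; rw [h, h1] at hk3; omega
  exact ⟨k-1, by omega, by omega, by rwa [show k-1+1 = k by omega]⟩

/-- partner of an opener: first matching descent -/
def oM {w : Fin m → Bool} (hb : Ballot w) {a : ℕ} (ha : a < m)
    (hw : w ⟨a, ha⟩ = true) : ℕ := Nat.find (oExists hb ha hw)

lemma oM_spec {w : Fin m → Bool} (hb : Ballot w) {a : ℕ} (ha : a < m)
    (hw : w ⟨a, ha⟩ = true) : oP w a (oM hb ha hw) := Nat.find_spec (oExists hb ha hw)

lemma oM_min {w : Fin m → Bool} (hb : Ballot w) {a : ℕ} (ha : a < m)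
    (hw : w ⟨a, ha⟩ = true) {c : ℕ} (hc : c < oM hb ha hw) : ¬ oP w a c :=
  Nat.find_min (oExists hb ha hw) hc

lemma oM_heights {w : Fin m → Bool} (hb : Ballot w) {a : ℕ} (ha : a < m)
    (hw : w ⟨a, ha⟩ = true) {d : ℕ} (hd1 : a < d) (hd2 : d ≤ oM hb ha hw) :
    hgt w a < hgt w d := by
  by_contra hc
  push_neg at hc
  have h1 : hgt w (a+1) = hgt w a + 1 := hgt_succ_true ha hw
  obtain ⟨k, hk1, hk2, hk3⟩ := ivt_down (hgt w) (hgt_step w) (hgt w a)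
    (show a+1 ≤ d by omega) (by omega) hc
  have hk4 : k ≠ a+1 := by intro h; rw [h, h1] at hk3; omega
  obtain ⟨hoM1, hoM2, hoM3⟩ := oM_spec hb ha hw
  have hcm : k - 1 < oM hb ha hw := by omega
  exact oM_min hb ha hw hcm ⟨by omega, by omega, by rwa [show k-1+1 = k by omega]⟩

lemma oM_closer {w : Fin m → Bool} (hb : Ballot w) {a : ℕ} (ha : a < m)
    (hw : w ⟨a, ha⟩ = true) : w ⟨oM hb ha hw, (oM_spec hb ha hw).2.1⟩ = false := by
  obtain ⟨h1, h2, h3⟩ := oM_spec hb ha hw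
  have h4 : hgt w a < hgt w (oM hb ha hw) := oM_heights hb ha hw h1 (le_refl _)
  by_contra hc
  have hc' : w ⟨oM hb ha hw, h2⟩ = true := by simpa using hc
  have := hgt_succ_true h2 hc'
  omega

/-- the predicate defining the partner of a closer -/
def cP (w : Fin m → Bool) (c : ℕ) (b : ℕ) : Prop := hgt w b = hgt w (c+1)

instance {w : Fin m → Bool} {c : ℕ} : DecidablePred (cP w c) := fun _ => by
  unfold cP; infer_instance

/-- partner of a closer: last matching ascent -/
def cM (w : Fin m → Bool) (c : ℕ) : ℕ := Nat.findGreatest (cP w c) c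

lemma cExists {w : Fin m → Bool} (hb : Ballot w) {c : ℕ} (hc : c < m)
    (hw : w ⟨c, hc⟩ = false) : ∃ b, b ≤ c ∧ cP w c b := by
  have h1 : hgt w (c+1) = hgt w c - 1 := hgt_succ_false hc hw
  obtain ⟨k, hk1, hk2, hk3⟩ := ivt_up (hgt w) (hgt_step w) (hgt w (c+1))
    (Nat.zero_le c) (by rw [hgt_zero]; exact hgt_nonneg hb (c+1)) (by omega)
  exact ⟨k, hk2, hk3⟩

lemma cM_spec {w : Fin m → Bool} (hb : Ballot w) {c : ℕ} (hc : c < m)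
    (hw : w ⟨c, hc⟩ = false) : hgt w (cM w c) = hgt w (c+1) := by
  obtain ⟨b, hb1, hb2⟩ := cExists hb hc hw
  exact Nat.findGreatest_spec hb1 hb2

lemma cM_le {w : Fin m → Bool} (c : ℕ) : cM w c ≤ c := Nat.findGreatest_le c

lemma cM_lt {w : Fin m → Bool} (hb : Ballot w) {c : ℕ} (hc : c < m)
    (hw : w ⟨c, hc⟩ = false) : cM w c < c := by
  have h1 := cM_spec hb hc hw
  have h2 := cM_le (w := w) c
  rcases lt_or_eq_of_le h2 with h | h
  · exact h
  · exfalso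
    rw [h] at h1
    have := hgt_succ_false hc hw
    omega

lemma cM_heights {w : Fin m → Bool} (hb : Ballot w) {c : ℕ} (hc : c < m)
    (hw : w ⟨c, hc⟩ = false) {d : ℕ} (hd1 : cM w c < d) (hd2 : d ≤ c) :
    hgt w (c+1) < hgt w d := by
  have hstep := hgt_succ_false hc hw
  by_contra hcon
  push_neg at hcon
  have hne : hgt w d ≠ hgt w (c+1) := Nat.findGreatest_is_greatest hd1 hd2
  have hlt : hgt w d < hgt w (c+1) := lt_of_le_of_ne hcon hne
  obtain ⟨k, hk1, hk2, hk3⟩ := ivt_up (hgt w) (hgt_step w) (hgt w (c+1))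
    hd2 (le_of_lt hlt) (by omega)
  have : k ≠ c := by intro h; rw [h] at hk3; omega
  exact Nat.findGreatest_is_greatest (show cM w c < k by omega) (by omega) hk3

lemma cM_opener {w : Fin m → Bool} (hb : Ballot w) {c : ℕ} (hc : c < m)
    (hw : w ⟨c, hc⟩ = false) :
    w ⟨cM w c, lt_trans (cM_lt hb hc hw) hc⟩ = true := by
  have h1 := cM_lt hb hc hw
  have h2 : hgt w (c+1) < hgt w (cM w c + 1) := cM_heights hb hc hw (by omega) (by omega)
  have h3 := cM_spec hb hc hw
  by_contra hcon
  have hcon' : w ⟨cM w c, lt_trans h1 hc⟩ = false := by simpa using hcon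
  have := hgt_succ_false (lt_trans h1 hc) hcon'
  omega

/-- the LIFO (parenthesis) matching function -/
def lifoFun {w : Fin m → Bool} (hb : Ballot w) (x : Fin m) : Fin m :=
  if hw : w x = true then
    ⟨oM hb x.isLt hw, (oM_spec hb x.isLt hw).2.1⟩
  else
    ⟨cM w x.val, lt_trans (cM_lt hb x.isLt (by simpa using hw)) x.isLt⟩

lemma lifoFun_of_true {w : Fin m → Bool} (hb : Ballot w) {x : Fin m} (hw : w x = true) :
    (lifoFun hb x).val = oM hb x.isLt hw := by
  rw [lifoFun, dif_pos hw]

lemma lifoFun_of_false {w : Fin m → Bool} (hb : Ballot w) {x : Fin m} (hw : w x = false) :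
    (lifoFun hb x).val = cM w x.val := by
  rw [lifoFun, dif_neg (by simp [hw])]


lemma oM_eq {w : Fin m → Bool} (hb : Ballot w) {a : ℕ} (ha : a < m) (hw : w ⟨a, ha⟩ = true)
    {y : ℕ} (hP : oP w a y) (hmin : ∀ z, z < y → ¬ oP w a z) : oM hb ha hw = y := by
  rw [oM, Nat.find_eq_iff]
  exact ⟨hP, fun z hz => hmin z hz⟩

lemma cM_eq {w : Fin m → Bool} {c y : ℕ} (hy : y ≤ c) (hP : cP w c y)
    (hmax : ∀ z, y < z → z ≤ c → ¬ cP w c z) : cM w c = y := by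
  rw [cM, Nat.findGreatest_eq_iff]
  exact ⟨hy, fun _ => hP, fun n h1 h2 => hmax n h1 h2⟩

lemma lifo_invol {w : Fin m → Bool} (hb : Ballot w) : Function.Involutive (lifoFun hb) := by
  intro x
  by_cases hw : w x = true
  · -- x opener, partner c := oM, a closer; then cM w c = x.val
    set c := oM hb x.isLt hw with hcdef
    have hspec := oM_spec hb x.isLt hw
    have hcl := oM_closer hb x.isLt hw
    have h1 : (lifoFun hb x).val = c := lifoFun_of_true hb hw
    have h2 : w (lifoFun hb x) = false := by
      have he : lifoFun hb x = ⟨c, hspec.2.1⟩ := Fin.ext h1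
      rw [he]
      exact hcl
    apply Fin.ext
    rw [lifoFun_of_false hb h2, h1]
    apply cM_eq (le_of_lt hspec.1)
    · rw [cP]
      exact hspec.2.2.symm
    · intro z hz1 hz2 hPz
      rw [cP] at hPz
      have hh := oM_heights hb x.isLt hw hz1 hz2
      rw [hPz, hspec.2.2] at hh
      exact lt_irrefl _ hh
  · -- x closer, partner b := cM, an opener; then oM at b = x.val
    have hw' : w x = false := by simpa using hw
    set b := cM w x.val with hbdef
    have hblt : b < x.val := cM_lt hb x.isLt hw'
    have hop := cM_opener hb x.isLt hw'
    have hbspec := cM_spec hb x.isLt hw'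
    have h1 : (lifoFun hb x).val = b := lifoFun_of_false hb hw'
    have hbm : b < m := lt_trans hblt x.isLt
    have h2 : w (lifoFun hb x) = true := by
      have he : lifoFun hb x = ⟨b, hbm⟩ := Fin.ext h1
      rw [he]
      exact hop
    apply Fin.ext
    rw [lifoFun_of_true hb h2]
    apply oM_eq
    · refine ⟨?_, x.isLt, ?_⟩
      · rw [h1]; exact hblt
      · rw [h1]; exact hbspec.symm
    · intro z hz hoPz
      obtain ⟨hz1, hz2, hz3⟩ := hoPz
      rw [h1] at hz1 hz3
      have hh := cM_heights hb x.isLt hw' (show cM w x.val < z + 1 by omega)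
        (show z + 1 ≤ x.val by omega)
      rw [hz3, hbspec] at hh
      exact lt_irrefl _ hh

/-- the LIFO matching as a permutation -/
def matchLIFO {w : Fin m → Bool} (hb : Ballot w) : Equiv.Perm (Fin m) :=
  Function.Involutive.toPerm _ (lifo_invol hb)

lemma matchLIFO_apply {w : Fin m → Bool} (hb : Ballot w) (x : Fin m) :
    matchLIFO hb x = lifoFun hb x := rfl

lemma lifo_lt_of_true {w : Fin m → Bool} (hb : Ballot w) {x : Fin m} (hw : w x = true) :
    x < lifoFun hb x := by
  have h1 := lifoFun_of_true hb hw
  have h2 := (oM_spec hb x.isLt hw).1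
  show x.val < (lifoFun hb x).val
  omega

lemma lifo_gt_of_false {w : Fin m → Bool} (hb : Ballot w) {x : Fin m} (hw : w x = false) :
    lifoFun hb x < x := by
  have h1 := lifoFun_of_false hb hw
  have h2 := cM_lt hb x.isLt hw
  show (lifoFun hb x).val < x.val
  omega

lemma matchLIFO_perfect {w : Fin m → Bool} (hb : Ballot w) : IsPerfMatching (matchLIFO hb) := by
  constructor
  · ext x
    simp only [Equiv.Perm.mul_apply, matchLIFO_apply, Equiv.Perm.one_apply]
    rw [lifo_invol hb x]
  · intro x h
    rw [matchLIFO_apply] at h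
    by_cases hw : w x = true
    · have h2 := lifo_lt_of_true hb hw
      rw [h] at h2
      exact absurd h2 (lt_irrefl x)
    · have h2 := lifo_gt_of_false hb (show w x = false by simpa using hw)
      rw [h] at h2
      exact absurd h2 (lt_irrefl x)

lemma wd_matchLIFO {w : Fin m → Bool} (hb : Ballot w) : wd (matchLIFO hb) = w := by
  funext x
  by_cases hw : w x = true
  · rw [hw, wd]
    simp only [decide_eq_true_eq, matchLIFO_apply]
    exact decide_eq_true (lifo_lt_of_true hb hw)
  · have hw' : w x = false := by simpa using hw
    rw [hw', wd]
    simp only [decide_eq_false_iff_not, not_lt, matchLIFO_apply]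
    exact decide_eq_false (not_lt.mpr (le_of_lt (lifo_gt_of_false hb hw')))

lemma matchLIFO_noncrossing {w : Fin m → Bool} (hb : Ballot w) :
    ¬ HasCrossing (matchLIFO hb) := by
  rintro ⟨a, b, hab, hba, hcr⟩
  -- a < b < σ a < σ b
  have hwa : w a = true := by
    by_contra hc
    have := lifo_gt_of_false hb (show w a = false by simpa using hc)
    rw [← matchLIFO_apply hb] at this
    exact absurd (lt_trans hab hba) (not_lt.mpr (le_of_lt this))
  by_cases hwb : w b = true
  · -- b opener : its partner must close before σ a
    have hc1 : (matchLIFO hb a).val = oM hb a.isLt hwa := lifoFun_of_true hb hwa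
    have hc2 : (matchLIFO hb b).val = oM hb b.isLt hwb := lifoFun_of_true hb hwb
    set c := oM hb a.isLt hwa with hcdef
    have hspec := oM_spec hb a.isLt hwa
    have hbc : b.val < c := by
      have : (b : Fin m) < matchLIFO hb a := hba
      have h3 : b.val < (matchLIFO hb a).val := this
      omega
    -- hgt w b.val > hgt w a.val
    have hhb : hgt w a.val < hgt w b.val :=
      oM_heights hb a.isLt hwa (show a.val < b.val from hab) (le_of_lt hbc)
    -- descending IVT from b+1 to c+1 for value hgt w b.val
    have hstep : hgt w (b.val+1) = hgt w b.val + 1 := hgt_succ_true b.isLt hwb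
    obtain ⟨k, hk1, hk2, hk3⟩ := ivt_down (hgt w) (hgt_step w) (hgt w b.val)
      (show b.val+1 ≤ c+1 by omega) (by omega) (by rw [hspec.2.2]; omega)
    have hk4 : k ≠ b.val+1 := by intro h; rw [h, hstep] at hk3; omega
    -- k-1 satisfies oP w b.val
    have hP : oP w b.val (k-1) := ⟨by omega, by have := hspec.2.1; omega,
      by rwa [show k-1+1 = k by omega]⟩
    have hle : oM hb b.isLt hwb ≤ k-1 := Nat.find_le hP
    -- but σ b > σ a = c ≥ k-1
    have : (matchLIFO hb b).val ≤ c := by omega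
    have hlt : (matchLIFO hb a).val < (matchLIFO hb b).val := hcr
    omega
  · -- b closer : σ b < b < σ a contradiction
    have := lifo_gt_of_false hb (show w b = false by simpa using hwb)
    rw [← matchLIFO_apply hb] at this
    have h1 : (matchLIFO hb b).val < b.val := this
    have h2 : (matchLIFO hb a).val < (matchLIFO hb b).val := hcr
    have h3 : b.val < (matchLIFO hb a).val := hba
    omega

end LIFO

section LIFOUnique

variable {m : ℕ} {σ : Equiv.Perm (Fin m)}

lemma ncross_inv (hσ : IsPerfMatching σ) (hnc : ¬ HasCrossing σ) {a x : Fin m}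
    (h1 : a < x) (h2 : x < σ a) : a < σ x ∧ σ x < σ a := by
  constructor
  · by_contra hc
    push_neg at hc
    have hne : σ x ≠ a := by
      intro he
      have h3 := congrArg σ he
      rw [pm_apply_apply hσ] at h3
      exact absurd h3 (ne_of_lt h2)
    have hlt : σ x < a := lt_of_le_of_ne hc hne
    refine hnc ⟨σ x, a, hlt, ?_, ?_⟩
    · rw [pm_apply_apply hσ]; exact h1
    · rw [pm_apply_apply hσ]; exact h2
  · by_contra hc
    push_neg at hc
    have hne : σ a ≠ σ x := fun he => absurd (σ.injective he) (ne_of_lt h1)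
    exact hnc ⟨a, x, h1, h2, lt_of_le_of_ne hc hne⟩

lemma seg_balance (hσ : IsPerfMatching σ) (hnc : ¬ HasCrossing σ) {a : Fin m}
    (ha : a < σ a) :
    uSeg (wd σ) a.val ((σ a).val + 1) = dSeg (wd σ) a.val ((σ a).val + 1) := by
  have hwa : wd σ a = true := (wd_true_iff hσ a).mpr ha
  have hwsa : wd σ (σ a) = false := by rw [wd_apply hσ, hwa]; rfl
  apply Finset.card_bij (fun x _ => σ x)
  · intro x hx
    simp only [uSeg, dSeg, Finset.mem_filter, Finset.mem_univ, true_and] at hx ⊢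
    obtain ⟨hx1, hx2, hx3⟩ := hx
    have hbounds : a.val ≤ (σ x).val ∧ (σ x).val < (σ a).val + 1 := by
      rcases eq_or_lt_of_le (show a.val ≤ x.val from hx1) with h | h
      · have he : a = x := Fin.ext h
        rw [← he]
        have : a.val < (σ a).val := ha
        omega
      · have hax : a < x := h
        have hxsa : x < σ a := by
          have hne : x ≠ σ a := by
            intro he
            rw [he, hwsa] at hx3
            exact Bool.noConfusion hx3
          exact lt_of_le_of_ne (by show x.val ≤ (σ a).val; omega) hne
        obtain ⟨k1, k2⟩ := ncross_inv hσ hnc hax hxsa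
        have k1' : a.val < (σ x).val := k1
        have k2' : (σ x).val < (σ a).val := k2
        omega
    refine ⟨hbounds.1, hbounds.2, ?_⟩
    rw [wd_apply hσ, hx3]
    rfl
  · intro x _ y _ h
    exact σ.injective h
  · intro y hy
    simp only [uSeg, dSeg, Finset.mem_filter, Finset.mem_univ, true_and] at hy
    obtain ⟨hy1, hy2, hy3⟩ := hy
    refine ⟨σ y, ?_, pm_apply_apply hσ y⟩
    simp only [Finset.mem_filter, Finset.mem_univ, true_and]
    have hbounds : a.val ≤ (σ y).val ∧ (σ y).val < (σ a).val + 1 := by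
      rcases eq_or_lt_of_le (show y.val ≤ (σ a).val by omega) with h | h
      · have he : y = σ a := Fin.ext h
        rw [he, pm_apply_apply hσ]
        have : a.val < (σ a).val := ha
        omega
      · have hya : a < y := by
          have hne : a ≠ y := by
            intro he
            rw [← he, hwa] at hy3
            exact Bool.noConfusion hy3
          exact lt_of_le_of_ne (by show a.val ≤ y.val; omega) hne
        obtain ⟨k1, k2⟩ := ncross_inv hσ hnc hya h
        have k1' : a.val < (σ y).val := k1
        have k2' : (σ y).val < (σ a).val := k2
        omega
    refine ⟨hbounds.1, hbounds.2, ?_⟩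
    rw [wd_apply hσ, hy3]
    rfl

lemma hgt_arc (hσ : IsPerfMatching σ) (hnc : ¬ HasCrossing σ) {a : Fin m}
    (ha : a < σ a) : hgt (wd σ) ((σ a).val + 1) = hgt (wd σ) a.val := by
  have hle : a.val ≤ (σ a).val + 1 := by
    have : a.val < (σ a).val := ha
    omega
  have h1 := uC_split (wd σ) hle
  have h2 := dC_split (wd σ) hle
  have h3 := seg_balance hσ hnc ha
  rw [hgt, hgt, h1, h2, h3]
  push_cast
  ring

lemma hgt_arc_min (hσ : IsPerfMatching σ) (hnc : ¬ HasCrossing σ) {a : Fin m}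
    (ha : a < σ a) {d : ℕ} (hd1 : a.val < d) (hd2 : d ≤ (σ a).val) :
    hgt (wd σ) a.val < hgt (wd σ) d := by
  have key : dSeg (wd σ) (a.val+1) d ≤ uSeg (wd σ) (a.val+1) d := by
    apply Finset.card_le_card_of_injOn (fun x => σ x)
    · intro x hx
      simp only [dSeg, uSeg, Finset.mem_coe, Finset.mem_filter, Finset.mem_univ, true_and] at hx ⊢
      obtain ⟨hx1, hx2, hx3⟩ := hx
      have hax : a < x := by show a.val < x.val; omega
      have hxsa : x < σ a := by show x.val < (σ a).val; omega
      obtain ⟨k1, k2⟩ := ncross_inv hσ hnc hax hxsa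
      have hcl : σ x < x := (wd_false_iff hσ x).mp hx3
      have k1' : a.val < (σ x).val := k1
      have hcl' : (σ x).val < x.val := hcl
      refine ⟨by omega, by omega, ?_⟩
      rw [wd_apply hσ, hx3]
      rfl
    · intro x _ y _ h
      exact σ.injective h
  have hwa : wd σ a = true := (wd_true_iff hσ a).mpr ha
  have ha1 : hgt (wd σ) (a.val+1) = hgt (wd σ) a.val + 1 := hgt_succ_true a.isLt hwa
  have e1 := uC_split (wd σ) (show a.val + 1 ≤ d by omega)
  have e2 := dC_split (wd σ) (show a.val + 1 ≤ d by omega)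
  have e3 : hgt (wd σ) d = hgt (wd σ) (a.val+1)
      + ((uSeg (wd σ) (a.val+1) d : ℤ) - (dSeg (wd σ) (a.val+1) d : ℤ)) := by
    rw [hgt, hgt, e1, e2]
    push_cast
    ring
  omega

theorem noncrossing_eq_matchLIFO (hσ : IsPerfMatching σ) (hnc : ¬ HasCrossing σ) :
    σ = matchLIFO (ballot_wd hσ) := by
  apply pm_ext hσ (matchLIFO_perfect (ballot_wd hσ))
  intro x hx
  apply Fin.ext
  show (σ x).val = (matchLIFO (ballot_wd hσ) x).val
  rw [matchLIFO_apply, lifoFun_of_true (ballot_wd hσ) hx]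
  symm
  have hlt : x < σ x := (wd_true_iff hσ x).mp hx
  apply oM_eq
  · exact ⟨hlt, (σ x).isLt, hgt_arc hσ hnc hlt⟩
  · intro z hz hoPz
    obtain ⟨hz1, hz2, hz3⟩ := hoPz
    have := hgt_arc_min hσ hnc hlt (show x.val < z + 1 by omega)
      (show z + 1 ≤ (σ x).val by omega)
    omega

end LIFOUnique

section Dyck

variable {m : ℕ}

def toListW (w : Fin m → Bool) : List DyckStep :=
  List.ofFn (fun i => if w i then U else D)

lemma toListW_length (w : Fin m → Bool) : (toListW w).length = m := by
  rw [toListW, List.length_ofFn]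

lemma count_take (w : Fin m → Bool) (i : ℕ) :
    ((toListW w).take i).count U = uC w i ∧ ((toListW w).take i).count D = dC w i := by
  induction i with
  | zero =>
    constructor
    · simp only [List.take_zero, List.count_nil]
      symm
      rw [uC, Finset.card_eq_zero]
      ext x
      simp
    · simp only [List.take_zero, List.count_nil]
      symm
      rw [dC, Finset.card_eq_zero]
      ext x
      simp
  | succ i ih =>
    rw [List.take_succ]
    by_cases h : i < m
    · have hget : (toListW w)[i]? = some (if w ⟨i, h⟩ then U else D) := by
        rw [toListW, List.getElem?_ofFn]
        simp [List.ofFnNthVal, h]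
      rw [hget]
      have hu : uC w (i+1) = uC w i + uSeg w i (i+1) := uC_split w (Nat.le_succ i)
      have hd : dC w (i+1) = dC w i + dSeg w i (i+1) := dC_split w (Nat.le_succ i)
      rw [hu, hd, uSeg_succ w i h, dSeg_succ w i h]
      constructor <;>
      · rw [List.count_append]
        by_cases hw : w ⟨i, h⟩ <;> simp [hw, ih.1, ih.2]
    · have hget : (toListW w)[i]? = none := by
        rw [toListW, List.getElem?_ofFn]
        simp [List.ofFnNthVal, h]
      rw [hget]
      have hu : uC w (i+1) = uC w i + uSeg w i (i+1) := uC_split w (Nat.le_succ i)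
      have hd : dC w (i+1) = dC w i + dSeg w i (i+1) := dC_split w (Nat.le_succ i)
      have h1 : uSeg w i (i+1) = 0 := by
        rw [uSeg, Finset.card_eq_zero]
        ext x
        simp only [Finset.mem_filter, Finset.mem_univ, true_and, Finset.notMem_empty, iff_false]
        intro ⟨h1, _, _⟩
        exact absurd x.isLt (by omega)
      have h2 : dSeg w i (i+1) = 0 := by
        rw [dSeg, Finset.card_eq_zero]
        ext x
        simp only [Finset.mem_filter, Finset.mem_univ, true_and, Finset.notMem_empty, iff_false]
        intro ⟨h1, _, _⟩
        exact absurd x.isLt (by omega)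
      rw [hu, hd, h1, h2]
      simpa using ih

lemma take_toListW (w : Fin m → Bool) : (toListW w).take m = toListW w := by
  exact List.take_of_length_le (le_of_eq (toListW_length w))

/-- the Dyck word of a ballot sequence -/
def dyckOf {w : Fin m → Bool} (hb : Ballot w) : DyckWord where
  toList := toListW w
  count_U_eq_count_D := by
    have h := count_take w m
    rw [take_toListW w] at h
    rw [h.1, h.2, hb.1]
  count_D_le_count_U i := by
    have h := count_take w i
    rw [h.1, h.2]
    exact hb.2 i

lemma uC_add_dC {w : Fin m → Bool} : uC w m + dC w m = m := by
  rw [uC, dC]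
  have h1 : (univ.filter fun x : Fin m => x.val < m ∧ w x = true)
      = univ.filter (fun x : Fin m => w x = true) := by
    apply Finset.filter_congr
    intro x _
    simp [x.isLt]
  have h2 : (univ.filter fun x : Fin m => x.val < m ∧ w x = false)
      = univ.filter (fun x : Fin m => ¬ (w x = true)) := by
    apply Finset.filter_congr
    intro x _
    simp [x.isLt]
  rw [h1, h2, Finset.card_filter_add_card_filter_not]
  simp

lemma dyckOf_semilength {n : ℕ} {w : Fin (2*n) → Bool} (hb : Ballot w) :
    (dyckOf hb).semilength = n := by
  have h := count_take w (2*n)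
  rw [take_toListW w] at h
  have h2 : uC w (2*n) + dC w (2*n) = 2*n := uC_add_dC
  have h3 := hb.1
  rw [DyckWord.semilength]
  show (toListW w).count U = n
  rw [h.1]
  omega

/-- the ballot sequence of a Dyck word -/
def wOf (p : DyckWord) (h : p.toList.length = m) : Fin m → Bool :=
  fun i => decide (p.toList.get (Fin.cast h.symm i) = U)

lemma toListW_wOf (p : DyckWord) (h : p.toList.length = m) : toListW (wOf p h) = p.toList := by
  apply List.ext_getElem
  · rw [toListW_length, h]
  · intro i h1 h2
    rw [toListW_length] at h1
    simp only [toListW, List.getElem_ofFn]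
    rw [wOf]
    rcases (p.toList.get (Fin.cast h.symm ⟨i, h1⟩)).dichotomy with hU | hD
    · have hU' : (p.toList)[i]'h2 = U := hU
      simp [hU']
    · have hD' : (p.toList)[i]'h2 = D := hD
      refine (if_neg ?_).trans hD'.symm
      simp only [decide_eq_true_eq]
      intro hc
      have hU' : (p.toList)[i]'h2 = U := hc
      rw [hU'] at hD'
      exact absurd hD' (by decide)

lemma ballot_wOf (p : DyckWord) (h : p.toList.length = m) : Ballot (wOf p h) := by
  constructor
  · have hc := count_take (wOf p h) m
    rw [take_toListW, toListW_wOf p h] at hc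
    rw [← hc.1, ← hc.2]
    exact p.count_U_eq_count_D
  · intro i
    have hc := count_take (wOf p h) i
    rw [toListW_wOf p h] at hc
    rw [← hc.1, ← hc.2]
    exact p.count_D_le_count_U i

lemma dyck_length {n : ℕ} (p : DyckWord) (hp : p.semilength = n) : p.toList.length = 2 * n := by
  rw [← p.two_mul_semilength_eq_length, hp]

/-- ballot sequences of length 2n are in bijection with Dyck words of semilength n -/
def ballotEquivDyck (n : ℕ) :
    {w : Fin (2*n) → Bool // Ballot w} ≃ {p : DyckWord // p.semilength = n} where
  toFun t := ⟨dyckOf t.2, dyckOf_semilength t.2⟩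
  invFun s := ⟨wOf s.1 (dyck_length s.1 s.2), ballot_wOf s.1 (dyck_length s.1 s.2)⟩
  left_inv t := by
    apply Subtype.ext
    funext i
    show decide ((toListW t.1).get _ = U) = t.1 i
    have : (toListW t.1).get (Fin.cast (toListW_length t.1).symm i)
        = if t.1 i then U else D := by
      simp only [List.get_eq_getElem, toListW, List.getElem_ofFn]
      congr 1
    refine Eq.trans (congrArg (fun s => decide (s = U)) this) ?_
    by_cases hw : t.1 i <;> simp [hw]
  right_inv s := by
    apply Subtype.ext
    apply DyckWord.ext
    exact toListW_wOf s.1 (dyck_length s.1 s.2)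

end Dyck

section Main

/-- nonnesting matchings are in bijection with ballot sequences -/
noncomputable def nestEquivBallot (n : ℕ) :
    {σ : Equiv.Perm (Fin (2*n)) // IsPerfMatching σ ∧ ¬ HasNesting σ} ≃
      {w : Fin (2*n) → Bool // Ballot w} where
  toFun s := ⟨wd s.1, ballot_wd s.2.1⟩
  invFun t := ⟨matchFIFO t.2, matchFIFO_perfect t.2, matchFIFO_nonnesting t.2⟩
  left_inv s := Subtype.ext (nonnesting_eq_matchFIFO s.2.1 s.2.2).symm
  right_inv t := Subtype.ext (wd_matchFIFO t.2)

/-- noncrossing matchings are in bijection with ballot sequences -/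
noncomputable def crossEquivBallot (n : ℕ) :
    {σ : Equiv.Perm (Fin (2*n)) // IsPerfMatching σ ∧ ¬ HasCrossing σ} ≃
      {w : Fin (2*n) → Bool // Ballot w} where
  toFun s := ⟨wd s.1, ballot_wd s.2.1⟩
  invFun t := ⟨matchLIFO t.2, matchLIFO_perfect t.2, matchLIFO_noncrossing t.2⟩
  left_inv s := Subtype.ext (noncrossing_eq_matchLIFO s.2.1 s.2.2).symm
  right_inv t := Subtype.ext (wd_matchLIFO t.2)

end Main

end NCM

/-- The number of nonnesting matchings on `[2n]` equals the number of noncrossing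
matchings on `[2n]`, and both equal the Catalan number `C_n`. -/
theorem card_nonnesting_eq_card_noncrossing_eq_catalan (n : ℕ) :
    Nat.card {σ : Equiv.Perm (Fin (2 * n)) // IsPerfMatching σ ∧ ¬ HasNesting σ} =
      Nat.card {σ : Equiv.Perm (Fin (2 * n)) // IsPerfMatching σ ∧ ¬ HasCrossing σ} ∧
    Nat.card {σ : Equiv.Perm (Fin (2 * n)) // IsPerfMatching σ ∧ ¬ HasNesting σ} =
      catalan n := by
  constructor
  · exact Nat.card_congr ((NCM.nestEquivBallot n).trans (NCM.crossEquivBallot n).symm)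
  · rw [Nat.card_congr ((NCM.nestEquivBallot n).trans (NCM.ballotEquivDyck n)),
      Nat.card_eq_fintype_card, DyckWord.card_dyckWord_semilength_eq_catalan]
end
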